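/- Let α, β ∈ [0, π/2] with cos(4α) ≠ cos(4β). Then the partial transpose of the projection P₁₂ onto span{cosα·|00⟩ − sinα·|11⟩, cosβ·|01⟩ − sinβ·|10⟩} ⊂ ℂ²⊗ℂ² has a strictly negative eigenvalue. In particular P₁₂ is not a separable operator. -/

import Mathlib

noncomputable section

open scoped ComplexOrder

/-- The two-qubit Hilbert space ℂ² ⊗ ℂ², modeled as ℂ^(2×2) with the standard inner product. -/
abbrev TwoQubit : Type := EuclideanSpace ℂ (Fin 2 × Fin 2)

/-- The computational basis vector |ab⟩. -/
def ket (a b : Fin 2) : TwoQubit := EuclideanSpace.single (a, b) 1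

/-- A vector is a product vector if it is of the form u ⊗ w. -/
def IsProductVec (v : TwoQubit) : Prop :=
  ∃ u w : Fin 2 → ℂ, ∀ a b : Fin 2, v (a, b) = u a * w b

/-- The 2×2 coefficient matrix of a vector in ℂ² ⊗ ℂ². -/
def coeffMat (v : TwoQubit) : Matrix (Fin 2) (Fin 2) ℂ :=
  Matrix.of fun a b => v (a, b)

/-- Partial transpose (on the second tensor factor) of an operator on ℂ² ⊗ ℂ². -/
def ptrans (M : Matrix (Fin 2 × Fin 2) (Fin 2 × Fin 2) ℂ) :
    Matrix (Fin 2 × Fin 2) (Fin 2 × Fin 2) ℂ :=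
  Matrix.of fun p q => M (p.1, q.2) (q.1, p.2)

/-- The matrix of the orthogonal projection vv* + ww* onto span{v, w} (for orthonormal v, w). -/
def projMat (v w : TwoQubit) : Matrix (Fin 2 × Fin 2) (Fin 2 × Fin 2) ℂ :=
  Matrix.of fun p q => v p * star (v q) + w p * star (w q)

/-- `M` has a strictly negative (real) eigenvalue. -/
def HasNegEig (M : Matrix (Fin 2 × Fin 2) (Fin 2 × Fin 2) ℂ) : Prop :=
  ∃ c : ℝ, c < 0 ∧ ∃ x : (Fin 2 × Fin 2) → ℂ, x ≠ 0 ∧ M.mulVec x = (c : ℂ) • x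

/-- An operator on ℂ² ⊗ ℂ² is separable if it is a finite sum of Kronecker products of
positive semidefinite operators. -/
def SeparableOp (M : Matrix (Fin 2 × Fin 2) (Fin 2 × Fin 2) ℂ) : Prop :=
  ∃ (n : ℕ) (A B : Fin n → Matrix (Fin 2) (Fin 2) ℂ),
    (∀ i, (A i).PosSemidef) ∧ (∀ i, (B i).PosSemidef) ∧
    M = ∑ i, Matrix.kroneckerMap (· * ·) (A i) (B i)

/-- The state a₁ = cos α |00⟩ − sin α |11⟩ of the ensemble A_γ^[α,β]. -/
def aVec1 (α : ℝ) : TwoQubit :=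
  (Real.cos α : ℂ) • ket 0 0 - (Real.sin α : ℂ) • ket 1 1

/-- The state a₂ = cos β |01⟩ − sin β |10⟩ of the ensemble A_γ^[α,β]. -/
def aVec2 (β : ℝ) : TwoQubit :=
  (Real.cos β : ℂ) • ket 0 1 - (Real.sin β : ℂ) • ket 1 0

/-- The state a₃ = sin γ sin α |00⟩ + cos γ sin β |01⟩ + cos γ cos β |10⟩ + sin γ cos α |11⟩. -/
def aVec3 (α β γ : ℝ) : TwoQubit :=
  ((Real.sin γ * Real.sin α : ℝ) : ℂ) • ket 0 0 + ((Real.cos γ * Real.sin β : ℝ) : ℂ) • ket 0 1 +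
  ((Real.cos γ * Real.cos β : ℝ) : ℂ) • ket 1 0 + ((Real.sin γ * Real.cos α : ℝ) : ℂ) • ket 1 1

/-- The state a₄ = cos γ sin α |00⟩ − sin γ sin β |01⟩ − sin γ cos β |10⟩ + cos γ cos α |11⟩. -/
def aVec4 (α β γ : ℝ) : TwoQubit :=
  ((Real.cos γ * Real.sin α : ℝ) : ℂ) • ket 0 0 - ((Real.sin γ * Real.sin β : ℝ) : ℂ) • ket 0 1 -
  ((Real.sin γ * Real.cos β : ℝ) : ℂ) • ket 1 0 + ((Real.cos γ * Real.cos α : ℝ) : ℂ) • ket 1 1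

/-! ### Auxiliary lemmas -/

open Matrix in
lemma matrix_notation_check (A : Matrix (Fin 2) (Fin 2) ℂ) : Aᵀ = A.transpose := rfl

open Matrix

lemma ket_apply' (a b i j : Fin 2) : ket a b (i, j) = if i = a ∧ j = b then 1 else 0 := by
  simp [ket, EuclideanSpace.single_apply, Prod.ext_iff]

lemma aVec1_apply' (α : ℝ) (i j : Fin 2) :
    aVec1 α (i, j) = (if i = 0 ∧ j = 0 then (Real.cos α : ℂ) else 0)
      - (if i = 1 ∧ j = 1 then (Real.sin α : ℂ) else 0) := by
  have : aVec1 α (i,j) = (Real.cos α : ℂ) * ket 0 0 (i,j) - (Real.sin α : ℂ) * ket 1 1 (i,j) := rfl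
  rw [this, ket_apply', ket_apply']
  split <;> split <;> simp_all

lemma aVec2_apply' (β : ℝ) (i j : Fin 2) :
    aVec2 β (i, j) = (if i = 0 ∧ j = 1 then (Real.cos β : ℂ) else 0)
      - (if i = 1 ∧ j = 0 then (Real.sin β : ℂ) else 0) := by
  have : aVec2 β (i,j) = (Real.cos β : ℂ) * ket 0 1 (i,j) - (Real.sin β : ℂ) * ket 1 0 (i,j) := rfl
  rw [this, ket_apply', ket_apply']
  split <;> split <;> simp_all

/-- Negative eigenvalue data for the 2×2 symmetric block `!![a, b; b, d]` with negative
determinant. -/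
lemma eig_facts (a d b : ℝ) (ha : 0 ≤ a) (hd : 0 ≤ d) (hdet : a * d < b ^ 2) :
    ∃ c t : ℝ, c < 0 ∧ b ≠ 0 ∧
      a * (2 * b) + b * t = c * (2 * b) ∧ b * (2 * b) + d * t = c * t := by
  set s := Real.sqrt ((a - d) ^ 2 + 4 * b ^ 2) with hs_def
  have hs : s ^ 2 = (a - d) ^ 2 + 4 * b ^ 2 := Real.sq_sqrt (by positivity)
  have hs0 : 0 ≤ s := Real.sqrt_nonneg _
  refine ⟨(a + d - s) / 2, d - a - s, ?_, ?_, by ring, ?_⟩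
  · nlinarith [hs, hs0]
  · intro hb
    rw [hb] at hdet
    nlinarith
  · linear_combination (-(1:ℝ)/2) * hs

lemma cos_four_mul (x : ℝ) :
    Real.cos (4 * x) = 1 - 8 * (Real.sin x * Real.cos x) ^ 2 := by
  have h1 : Real.cos (4 * x) = 2 * Real.cos (2 * x) ^ 2 - 1 := by
    rw [show (4 : ℝ) * x = 2 * (2 * x) by ring, Real.cos_two_mul]
  have h2 := Real.cos_two_mul x
  have h3 := Real.sin_sq_add_cos_sq x
  nlinarith [h1, h2, h3]

lemma not_posSemidef_of_hasNegEig (M : Matrix (Fin 2 × Fin 2) (Fin 2 × Fin 2) ℂ)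
    (h : HasNegEig M) : ¬ M.PosSemidef := by
  rintro hM
  obtain ⟨c, hc, x, hx, hMx⟩ := h
  have h1 := hM.dotProduct_mulVec_nonneg x
  rw [hMx, dotProduct_smul] at h1
  have h2 : 0 < dotProduct (star x) x := dotProduct_star_self_pos_iff.mpr hx
  have : (c : ℂ) • (dotProduct (star x) x) < 0 := by
    rw [smul_eq_mul]
    exact mul_neg_of_neg_of_pos (by exact_mod_cast hc) h2
  exact absurd h1 this.not_ge

lemma ptrans_kron (A B : Matrix (Fin 2) (Fin 2) ℂ) :
    ptrans (Matrix.kroneckerMap (· * ·) A B) = Matrix.kroneckerMap (· * ·) A Bᵀ := rfl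

lemma kron_conjTranspose (A B : Matrix (Fin 2) (Fin 2) ℂ) :
    (Matrix.kroneckerMap (· * ·) A B)ᴴ = Matrix.kroneckerMap (· * ·) Aᴴ Bᴴ := by
  ext ⟨i, j⟩ ⟨k, l⟩
  simp [Matrix.conjTranspose_apply, Matrix.kroneckerMap_apply, mul_comm]

lemma kron_posSemidef {A B : Matrix (Fin 2) (Fin 2) ℂ} (hA : A.PosSemidef)
    (hB : B.PosSemidef) : (Matrix.kroneckerMap (· * ·) A B).PosSemidef := by
  exact Matrix.PosSemidef.kronecker hA hB

lemma ptrans_sum {n : ℕ} (f : Fin n → Matrix (Fin 2 × Fin 2) (Fin 2 × Fin 2) ℂ) :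
    ptrans (∑ i, f i) = ∑ i, ptrans (f i) := by
  ext p q
  simp [ptrans, Matrix.sum_apply]

lemma not_separable_of_ptrans_hasNegEig (M : Matrix (Fin 2 × Fin 2) (Fin 2 × Fin 2) ℂ)
    (h : HasNegEig (ptrans M)) : ¬ SeparableOp M := by
  rintro ⟨n, A, B, hA, hB, rfl⟩
  refine not_posSemidef_of_hasNegEig _ h ?_
  rw [ptrans_sum]
  refine Finset.sum_induction _ _ (fun a b ha hb => ha.add hb) Matrix.PosSemidef.zero ?_
  intro i _
  rw [ptrans_kron]
  exact kron_posSemidef (hA i) ((hB i).transpose)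

/-- If cos 4α ≠ cos 4β then the partial transpose of P₁₂ has a strictly negative
eigenvalue; in particular P₁₂ is not separable. -/
theorem stmt10 (α β : ℝ) (hα : α ∈ Set.Icc 0 (Real.pi / 2))
    (hβ : β ∈ Set.Icc 0 (Real.pi / 2)) (h : Real.cos (4 * α) ≠ Real.cos (4 * β)) :
    HasNegEig (ptrans (projMat (aVec1 α) (aVec2 β))) ∧
    ¬ SeparableOp (projMat (aVec1 α) (aVec2 β)) := by
  have key : HasNegEig (ptrans (projMat (aVec1 α) (aVec2 β))) := by
    have hne : (Real.sin α * Real.cos α) ^ 2 ≠ (Real.sin β * Real.cos β) ^ 2 := by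
      intro heq
      apply h
      rw [cos_four_mul, cos_four_mul, heq]
    rcases lt_or_gt_of_ne hne with hlt | hgt
    · -- block {(0,0),(1,1)}: a = ca², d = sa², b = -(Real.cos β*Real.sin β)
      obtain ⟨c, t, hc, hb, e1, e2⟩ := eig_facts (Real.cos α ^ 2) (Real.sin α ^ 2) (-(Real.cos β * Real.sin β))
        (sq_nonneg _) (sq_nonneg _) (by nlinarith)
      refine ⟨c, hc, fun p => if p = ((0 : Fin 2), (0 : Fin 2)) then ((2 * -(Real.cos β * Real.sin β) : ℝ) : ℂ)
        else if p = ((1 : Fin 2), (1 : Fin 2)) then ((t : ℝ) : ℂ) else 0, ?_, ?_⟩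
      · intro h0
        have := congrFun h0 ((0 : Fin 2), (0 : Fin 2))
        simp at this
        refine hb ?_
        rcases this with h' | h'
        · have hz : Real.cos β = 0 := by exact_mod_cast h'
          rw [hz]; ring
        · have hz : Real.sin β = 0 := by exact_mod_cast h'
          rw [hz]; ring
      · funext p
        obtain ⟨i, j⟩ := p
        have e1' : (Real.cos α : ℂ) ^ 2 * (2 * -((Real.cos β : ℂ) * Real.sin β)) + (-((Real.cos β : ℂ) * Real.sin β)) * t
            = c * (2 * -((Real.cos β : ℂ) * Real.sin β)) := by exact_mod_cast congrArg Complex.ofReal e1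
        have e2' : (-((Real.cos β : ℂ) * Real.sin β)) * (2 * -((Real.cos β : ℂ) * Real.sin β)) + (Real.sin α : ℂ) ^ 2 * t
            = (c : ℂ) * t := by exact_mod_cast congrArg Complex.ofReal e2
        fin_cases i <;> fin_cases j <;>
          simp [Matrix.mulVec, dotProduct, Fintype.sum_prod_type, Fin.sum_univ_two,
              ptrans, projMat, aVec1_apply', aVec2_apply', Complex.star_def, Complex.conj_ofReal,
              -Complex.ofReal_cos, -Complex.ofReal_sin, Prod.ext_iff, Fin.ext_iff, -Fin.val_eq_zero_iff] <;>
          first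
            | linear_combination e1'
            | linear_combination -e1'
            | linear_combination e2'
            | linear_combination -e2'
            | linear_combination e1' + e2'
            | linear_combination -e1' - e2'
    · -- block {(0,1),(1,0)}: a = cb², d = sb², b = -(Real.cos α*Real.sin α)
      obtain ⟨c, t, hc, hb, e1, e2⟩ := eig_facts (Real.cos β ^ 2) (Real.sin β ^ 2) (-(Real.cos α * Real.sin α))
        (sq_nonneg _) (sq_nonneg _) (by nlinarith)
      refine ⟨c, hc, fun p => if p = ((0 : Fin 2), (1 : Fin 2)) then ((2 * -(Real.cos α * Real.sin α) : ℝ) : ℂ)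
        else if p = ((1 : Fin 2), (0 : Fin 2)) then ((t : ℝ) : ℂ) else 0, ?_, ?_⟩
      · intro h0
        have := congrFun h0 ((0 : Fin 2), (1 : Fin 2))
        simp at this
        refine hb ?_
        rcases this with h' | h'
        · have hz : Real.cos α = 0 := by exact_mod_cast h'
          rw [hz]; ring
        · have hz : Real.sin α = 0 := by exact_mod_cast h'
          rw [hz]; ring
      · funext p
        obtain ⟨i, j⟩ := p
        have e1' : (Real.cos β : ℂ) ^ 2 * (2 * -((Real.cos α : ℂ) * Real.sin α)) + (-((Real.cos α : ℂ) * Real.sin α)) * t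
            = c * (2 * -((Real.cos α : ℂ) * Real.sin α)) := by exact_mod_cast congrArg Complex.ofReal e1
        have e2' : (-((Real.cos α : ℂ) * Real.sin α)) * (2 * -((Real.cos α : ℂ) * Real.sin α)) + (Real.sin β : ℂ) ^ 2 * t
            = (c : ℂ) * t := by exact_mod_cast congrArg Complex.ofReal e2
        fin_cases i <;> fin_cases j <;>
          simp [Matrix.mulVec, dotProduct, Fintype.sum_prod_type, Fin.sum_univ_two,
              ptrans, projMat, aVec1_apply', aVec2_apply', Complex.star_def, Complex.conj_ofReal,
              -Complex.ofReal_cos, -Complex.ofReal_sin, Prod.ext_iff, Fin.ext_iff, -Fin.val_eq_zero_iff] <;>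
          first
            | linear_combination e1'
            | linear_combination -e1'
            | linear_combination e2'
            | linear_combination -e2'
            | linear_combination e1' + e2'
            | linear_combination -e1' - e2'
  exact ⟨key, not_separable_of_ptrans_hasNegEig _ key⟩
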